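/- Let $G$ be a connected locally finite graph, $T \geq 1$ an integer, and define $\Phi_T(x) = P^T\mathbf{1}_x/\sqrt{\deg(x)} \in \ell^2(G)$ and $\mathcal{C}_T(x) = \{y \in V(G) : \|\Phi_T(x) - \Phi_T(y)\| \leq \|\Phi_T(y)\|\}$ (distances in $\ell^2(G)$). Then for every $x \in V(G)$ with $p_{2T}(x,x) > 0$, $|\mathcal{C}_T(x)| \leq \frac{4}{p_{2T}(x,x)}$. -/

import Mathlib

open Finset

noncomputable section

/-- The random walk matrix `P = D⁻¹ A`. -/
def walkMatrix {V : Type*} [Fintype V] [DecidableEq V] (G : SimpleGraph V)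
    [DecidableRel G.Adj] : Matrix V V ℝ :=
  Matrix.diagonal (fun x => ((G.degree x : ℝ))⁻¹) * G.adjMatrix ℝ

/-- The heat kernel embedding `Φ_T(x) = P^T 1_x / √(deg x)`. -/
def heatEmbed {V : Type*} [Fintype V] [DecidableEq V] (G : SimpleGraph V)
    [DecidableRel G.Adj] (T : ℕ) (x : V) : V → ℝ :=
  fun v => (walkMatrix G ^ T).mulVec (fun u => if u = x then (1 : ℝ) else 0) v /
    Real.sqrt (G.degree x)

/-- The norm of `ℓ²(G)`, the degree-weighted `ℓ²` space. -/
def l2norm {V : Type*} [Fintype V] [DecidableEq V] (G : SimpleGraph V)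
    [DecidableRel G.Adj] (f : V → ℝ) : ℝ :=
  Real.sqrt (∑ v, (G.degree v : ℝ) * f v ^ 2)

namespace HeatAux
variable {V : Type*} [Fintype V] [DecidableEq V] (G : SimpleGraph V) [DecidableRel G.Adj]

/-- degree-weighted inner product -/
def ip (f g : V → ℝ) : ℝ := ∑ v, (G.degree v : ℝ) * f v * g v

lemma walk_apply (f : V → ℝ) (v : V) :
    (walkMatrix G).mulVec f v = ((G.degree v : ℝ))⁻¹ * ∑ u ∈ G.neighborFinset v, f u := by
  rw [walkMatrix, ← Matrix.mulVec_mulVec, Matrix.mulVec_diagonal,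
    SimpleGraph.adjMatrix_mulVec_apply]

lemma deg_walk (f : V → ℝ) (v : V) :
    (G.degree v : ℝ) * (walkMatrix G).mulVec f v = ∑ u ∈ G.neighborFinset v, f u := by
  rw [walk_apply]
  rcases Nat.eq_zero_or_pos (G.degree v) with h | h
  · have hnb : G.neighborFinset v = ∅ := Finset.card_eq_zero.mp
      (by rw [G.card_neighborFinset_eq_degree]; exact h)
    simp [hnb, h]
  · have : (G.degree v : ℝ) ≠ 0 := Nat.cast_ne_zero.mpr h.ne'
    field_simp

lemma nbr_comm : ∀ (v u : V),
    v ∈ (Finset.univ : Finset V) ∧ u ∈ G.neighborFinset v ↔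
    v ∈ G.neighborFinset u ∧ u ∈ (Finset.univ : Finset V) := by
  intro v u
  simp [SimpleGraph.mem_neighborFinset, G.adj_comm]

lemma ip_selfAdjoint (f g : V → ℝ) :
    ip G ((walkMatrix G).mulVec f) g = ip G f ((walkMatrix G).mulVec g) := by
  unfold ip
  have L : ∀ v, (G.degree v : ℝ) * (walkMatrix G).mulVec f v * g v
      = ∑ u ∈ G.neighborFinset v, f u * g v := by
    intro v; rw [deg_walk, Finset.sum_mul]
  have R : ∀ u, (G.degree u : ℝ) * f u * (walkMatrix G).mulVec g u
      = ∑ w ∈ G.neighborFinset u, f u * g w := by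
    intro u
    rw [mul_comm ((G.degree u : ℝ)) (f u), mul_assoc, deg_walk, Finset.mul_sum]
  simp only [L, R]
  exact Finset.sum_comm' (nbr_comm G)

lemma pow_mulVec_succ (n : ℕ) (f : V → ℝ) :
    (walkMatrix G ^ (n+1)).mulVec f
      = (walkMatrix G ^ n).mulVec ((walkMatrix G).mulVec f) := by
  rw [Matrix.mulVec_mulVec, ← pow_succ]

lemma pow_mulVec_succ' (n : ℕ) (f : V → ℝ) :
    (walkMatrix G ^ (n+1)).mulVec f
      = (walkMatrix G).mulVec ((walkMatrix G ^ n).mulVec f) := by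
  rw [Matrix.mulVec_mulVec, ← pow_succ']

lemma ip_pow_selfAdjoint (n : ℕ) (f g : V → ℝ) :
    ip G ((walkMatrix G ^ n).mulVec f) g = ip G f ((walkMatrix G ^ n).mulVec g) := by
  induction n generalizing f g with
  | zero => simp [Matrix.one_mulVec]
  | succ n ih =>
    calc ip G ((walkMatrix G ^ (n+1)).mulVec f) g
        = ip G ((walkMatrix G ^ n).mulVec ((walkMatrix G).mulVec f)) g := by
          rw [pow_mulVec_succ]
      _ = ip G ((walkMatrix G).mulVec f) ((walkMatrix G ^ n).mulVec g) := ih _ _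
      _ = ip G f ((walkMatrix G).mulVec ((walkMatrix G ^ n).mulVec g)) :=
          ip_selfAdjoint G _ _
      _ = ip G f ((walkMatrix G ^ (n+1)).mulVec g) := by rw [← pow_mulVec_succ']

lemma ip_contraction (f : V → ℝ) :
    ip G ((walkMatrix G).mulVec f) ((walkMatrix G).mulVec f) ≤ ip G f f := by
  unfold ip
  have key : ∀ v, (G.degree v : ℝ) * (walkMatrix G).mulVec f v * (walkMatrix G).mulVec f v
      ≤ ∑ u ∈ G.neighborFinset v, f u ^ 2 := by
    intro v
    rcases Nat.eq_zero_or_pos (G.degree v) with h | h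
    · have hz : (walkMatrix G).mulVec f v = 0 := by
        have hnb : G.neighborFinset v = ∅ := Finset.card_eq_zero.mp
          (by rw [G.card_neighborFinset_eq_degree]; exact h)
        rw [walk_apply, hnb]; simp
      rw [hz]
      simpa using Finset.sum_nonneg fun u _ => sq_nonneg (f u)
    · have hd : (0:ℝ) < (G.degree v : ℝ) := Nat.cast_pos.mpr h
      have hcs : (∑ u ∈ G.neighborFinset v, f u) ^ 2
          ≤ (G.degree v : ℝ) * ∑ u ∈ G.neighborFinset v, f u ^ 2 := by
        have := sum_mul_sq_le_sq_mul_sq (G.neighborFinset v) (fun _ => (1:ℝ)) f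
        simpa [SimpleGraph.card_neighborFinset_eq_degree] using this
      rw [walk_apply]
      have heq : (G.degree v : ℝ) * (((G.degree v : ℝ))⁻¹ * ∑ u ∈ G.neighborFinset v, f u)
          * (((G.degree v : ℝ))⁻¹ * ∑ u ∈ G.neighborFinset v, f u)
          = (∑ u ∈ G.neighborFinset v, f u) ^ 2 / (G.degree v : ℝ) := by
        field_simp
      rw [heq, div_le_iff₀ hd]
      nlinarith [hcs]
  calc ∑ v, (G.degree v : ℝ) * (walkMatrix G).mulVec f v * (walkMatrix G).mulVec f v
      ≤ ∑ v, ∑ u ∈ G.neighborFinset v, f u ^ 2 := Finset.sum_le_sum fun v _ => key v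
    _ = ∑ u, ∑ v ∈ G.neighborFinset u, f u ^ 2 := Finset.sum_comm' (nbr_comm G)
    _ = ∑ v, (G.degree v : ℝ) * f v * f v := by
        refine Finset.sum_congr rfl fun u _ => ?_
        rw [Finset.sum_const, nsmul_eq_mul, SimpleGraph.card_neighborFinset_eq_degree]
        ring

lemma ip_pow_contraction (n : ℕ) (f : V → ℝ) :
    ip G ((walkMatrix G ^ n).mulVec f) ((walkMatrix G ^ n).mulVec f) ≤ ip G f f := by
  induction n generalizing f with
  | zero => simp [Matrix.one_mulVec]
  | succ n ih =>
    rw [pow_mulVec_succ]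
    exact le_trans (ih _) (ip_contraction G f)

end HeatAux

/-- The set `𝒞_T(x) = {y : ‖Φ_T(x) - Φ_T(y)‖ ≤ ‖Φ_T(y)‖}` satisfies
`|𝒞_T(x)| ≤ 4 / p_{2T}(x,x)` whenever `p_{2T}(x,x) > 0`. -/
theorem heat_cone_card_bound {V : Type*} [Fintype V] [DecidableEq V]
    (G : SimpleGraph V) [DecidableRel G.Adj] (hconn : G.Connected)
    (T : ℕ) (hT : 1 ≤ T) (x : V)
    (hpos : 0 < (walkMatrix G ^ (2 * T)) x x) :
    (({y | l2norm G (heatEmbed G T x - heatEmbed G T y) ≤ l2norm G (heatEmbed G T y)}.ncard :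
        ℝ)) ≤ 4 / (walkMatrix G ^ (2 * T)) x x := by
  classical
  set M := walkMatrix G with hMdef
  set p := (M ^ (2*T)) x x with hpdef
  set S := {y | l2norm G (heatEmbed G T x - heatEmbed G T y) ≤ l2norm G (heatEmbed G T y)}
    with hSdef
  -- delta vectors
  set δ : V → V → ℝ := fun z u => if u = z then (1:ℝ) else 0 with hδdef
  have hmv : ∀ (A : Matrix V V ℝ) (z v : V), A.mulVec (δ z) v = A v z := by
    intro A z v
    simp [hδdef, Matrix.mulVec, dotProduct, mul_ite]
  have hΦ : ∀ z : V, heatEmbed G T z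
      = fun v => (M ^ T).mulVec (δ z) v / Real.sqrt (G.degree z) := by
    intro z; rfl
  -- ip against a delta
  have hipδ : ∀ (h : V → ℝ) (z : V),
      HeatAux.ip G h (δ z) = (G.degree z : ℝ) * h z := by
    intro h z
    unfold HeatAux.ip
    rw [Finset.sum_eq_single z]
    · simp [hδdef]
    · intro b _ hb; simp [hδdef, hb]
    · intro hb; exact absurd (Finset.mem_univ z) hb
  have hipδ' : ∀ (h : V → ℝ) (z : V),
      HeatAux.ip G (δ z) h = (G.degree z : ℝ) * h z := by
    intro h z
    unfold HeatAux.ip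
    rw [Finset.sum_eq_single z]
    · simp [hδdef]
    · intro b _ hb; simp [hδdef, hb]
    · intro hb; exact absurd (Finset.mem_univ z) hb
  -- nonnegativity of ip f f
  have hipnn : ∀ f : V → ℝ, 0 ≤ HeatAux.ip G f f := by
    intro f
    refine Finset.sum_nonneg fun v _ => ?_
    have : (G.degree v : ℝ) * f v * f v = (G.degree v : ℝ) * (f v)^2 := by ring
    rw [this]; positivity
  -- l2norm in terms of ip
  have hl2 : ∀ f : V → ℝ, l2norm G f = Real.sqrt (HeatAux.ip G f f) := by
    intro f
    unfold l2norm HeatAux.ip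
    congr 1
    exact Finset.sum_congr rfl fun v _ => by ring
  -- degree of x is positive
  have hdx : (0:ℝ) < (G.degree x : ℝ) := by
    rcases Nat.eq_zero_or_pos (G.degree x) with h | h
    · exfalso
      have hrow : ∀ u, M x u = 0 := by
        intro u
        rw [hMdef, walkMatrix, Matrix.diagonal_mul, h]
        simp
      have h2T : 2*T = 1 + (2*T - 1) := by omega
      have : p = 0 := by
        rw [hpdef, h2T, pow_add, pow_one, Matrix.mul_apply]
        exact Finset.sum_eq_zero fun u _ => by rw [hrow u, zero_mul]
      rw [this] at hpos; exact lt_irrefl 0 hpos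
    · exact_mod_cast h
  have hsx : Real.sqrt (G.degree x) * Real.sqrt (G.degree x) = (G.degree x : ℝ) :=
    Real.mul_self_sqrt hdx.le
  have hsxne : Real.sqrt (G.degree x) ≠ 0 := (Real.sqrt_pos.mpr hdx).ne'
  -- the inner products I y
  set g : V → ℝ := heatEmbed G T x with hgdef
  set I : V → ℝ := fun y => HeatAux.ip G g (heatEmbed G T y) with hIdef
  set hfun : V → ℝ := (M ^ T).mulVec g with hhdef
  -- I y = √(deg y) * hfun y
  have hIval : ∀ y, I y = Real.sqrt (G.degree y) * hfun y := by
    intro y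
    have step1 : I y = HeatAux.ip G g ((M ^ T).mulVec (δ y)) / Real.sqrt (G.degree y) := by
      rw [hIdef]
      simp only
      rw [hΦ y]
      unfold HeatAux.ip
      rw [Finset.sum_div]
      exact Finset.sum_congr rfl fun v _ => by ring
    rw [step1, ← HeatAux.ip_pow_selfAdjoint G T g (δ y), hipδ,
      mul_comm ((G.degree y : ℝ)) _, mul_div_assoc, Real.div_sqrt]
    exact mul_comm _ _
  -- ∑ y, (I y)^2 = ip hfun hfun
  have hsum : ∑ y, (I y)^2 = HeatAux.ip G hfun hfun := by
    unfold HeatAux.ip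
    refine Finset.sum_congr rfl fun y _ => ?_
    rw [hIval y, mul_pow, Real.sq_sqrt (Nat.cast_nonneg _)]
    ring
  -- ip g g = p
  have hgg : HeatAux.ip G g g = p := by
    have step1 : HeatAux.ip G g g
        = HeatAux.ip G ((M ^ T).mulVec (δ x)) ((M ^ T).mulVec (δ x)) / (G.degree x : ℝ) := by
      rw [hgdef, hΦ x]
      unfold HeatAux.ip
      rw [Finset.sum_div]
      refine Finset.sum_congr rfl fun v _ => ?_
      rw [mul_assoc, div_mul_div_comm, hsx]
      ring
    rw [step1, HeatAux.ip_pow_selfAdjoint G T (δ x) ((M ^ T).mulVec (δ x)), hipδ']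
    rw [Matrix.mulVec_mulVec, ← pow_add]
    have : T + T = 2*T := by ring
    rw [this, hmv]
    field_simp
    rfl
  -- cone condition implies p/2 ≤ I y
  have hexp : ∀ f h : V → ℝ, HeatAux.ip G (f - h) (f - h)
      = HeatAux.ip G f f - 2 * HeatAux.ip G f h + HeatAux.ip G h h := by
    intro f h
    unfold HeatAux.ip
    rw [Finset.mul_sum, ← Finset.sum_sub_distrib, ← Finset.sum_add_distrib]
    exact Finset.sum_congr rfl fun v _ => by simp only [Pi.sub_apply]; ring
  have hcone : ∀ y ∈ S, p/2 ≤ I y := by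
    intro y hy
    have hy' : l2norm G (g - heatEmbed G T y) ≤ l2norm G (heatEmbed G T y) := hy
    rw [hl2, hl2] at hy'
    have hle : HeatAux.ip G (g - heatEmbed G T y) (g - heatEmbed G T y)
        ≤ HeatAux.ip G (heatEmbed G T y) (heatEmbed G T y) :=
      (Real.sqrt_le_sqrt_iff (hipnn _)).mp hy'
    rw [hexp] at hle
    have := hgg
    have hIy : I y = HeatAux.ip G g (heatEmbed G T y) := rfl
    linarith [hle, hgg.symm ▸ hle]
  -- counting
  have hSfin : S.Finite := Set.toFinite S
  have hcard : (S.ncard : ℝ) = (hSfin.toFinset.card : ℝ) := by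
    rw [Set.ncard_eq_toFinset_card _ hSfin]
  have hchain : (S.ncard : ℝ) * (p/2)^2 ≤ p := by
    have h1 : (hSfin.toFinset.card : ℝ) * (p/2)^2 ≤ ∑ y ∈ hSfin.toFinset, (I y)^2 := by
      have := Finset.card_nsmul_le_sum hSfin.toFinset (fun y => (I y)^2) ((p/2)^2)
        (fun y hy => by
          have hyS : y ∈ S := hSfin.mem_toFinset.mp hy
          have := hcone y hyS
          exact pow_le_pow_left₀ (by positivity) this 2)
      simpa [nsmul_eq_mul] using this
    have h2 : ∑ y ∈ hSfin.toFinset, (I y)^2 ≤ ∑ y, (I y)^2 :=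
      Finset.sum_le_sum_of_subset_of_nonneg (Finset.subset_univ _)
        (fun y _ _ => sq_nonneg _)
    have h3 : ∑ y, (I y)^2 ≤ p := by
      rw [hsum, ← hgg]
      exact HeatAux.ip_pow_contraction G T g
    rw [hcard]
    linarith
  rw [le_div_iff₀ hpos]
  nlinarith [hchain, hpos, Nat.cast_nonneg (α := ℝ) S.ncard]

end
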